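/- Let φ : ℝ → ℝ be a real-valued C¹ function satisfying φ'(t) ≤ −α < 0 for all t ≥ t₀. If x : [t₀,∞) → ℝⁿ is C¹ with d(|x(t)|²)/dt = −2a(t,x(t)) φ(t) for a function a bounded below by C₀ > 0 and above, and |x(t₀)| ≤ ρ, then |x(t)|² ≥ α C₀ (t−t₀)² − C₁ ρ (t−t₀) − ρ² for suitable constants, so |x(t)| → ∞ as t → ∞; in particular for each R > ρ there exists T_R > 0, independent of the initial data, with |x(t)| > R for t − t₀ > T_R. -/

import Mathlib

lemma mono_aux (t₀ : ℝ) (f f' : ℝ → ℝ) (hf : ∀ t ≥ t₀, HasDerivAt f (f' t) t)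
    (hf' : ∀ t ≥ t₀, 0 ≤ f' t) : ∀ t ≥ t₀, f t₀ ≤ f t := by
  have hmono : MonotoneOn f (Set.Ici t₀) := by
    apply monotoneOn_of_deriv_nonneg (convex_Ici t₀)
    · exact fun t ht => (hf t ht).continuousAt.continuousWithinAt
    · rw [interior_Ici]
      exact fun t ht => (hf t (le_of_lt ht)).differentiableAt.differentiableWithinAt
    · rw [interior_Ici]
      intro t ht
      rw [(hf t ht.le).deriv]
      exact hf' t ht.le
  exact fun t ht => hmono Set.self_mem_Ici ht ht

theorem stmt9 {n : ℕ} (α ρ C₀ C₀' : ℝ) (hα : 0 < α) (hρ : 0 < ρ) (hC₀ : 0 < C₀)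
    (a : ℝ → EuclideanSpace ℝ (Fin n) → ℝ)
    (ha : ∀ t y, C₀ ≤ a t y ∧ a t y ≤ C₀')
    (t₀ : ℝ) (φ φ' : ℝ → ℝ)
    (hφ : ∀ t ≥ t₀, HasDerivAt φ (φ' t) t) (hφ' : ∀ t ≥ t₀, φ' t ≤ -α)
    (x : ℝ → EuclideanSpace ℝ (Fin n))
    (hx : ∀ t ≥ t₀, HasDerivAt (fun s => ‖x s‖ ^ 2) (-2 * a t (x t) * φ t) t)
    (hx₀ : ‖x t₀‖ ≤ ρ) :
    ∃ C₁ > (0 : ℝ),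
      (∀ t ≥ t₀, ‖x t‖ ^ 2 ≥ α * C₀ * (t - t₀) ^ 2 - C₁ * ρ * (t - t₀) - ρ ^ 2) ∧
      ∀ R > ρ, ∃ TR > (0 : ℝ), ∀ t : ℝ, t - t₀ > TR → ‖x t‖ > R := by
  have hC₀' : C₀ ≤ C₀' := le_trans (ha t₀ 0).1 (ha t₀ 0).2
  set M : ℝ := max (φ t₀) 0 with hM
  have hM0 : 0 ≤ M := le_max_right _ _
  have hMφ : φ t₀ ≤ M := le_max_left _ _
  set K : ℝ := 2 * (C₀ + C₀') * M with hK
  have hK0 : 0 ≤ K := mul_nonneg (by linarith) hM0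
  set C₁ : ℝ := max (K / ρ) 1 with hC₁
  have hC₁0 : (0 : ℝ) < C₁ := lt_of_lt_of_le one_pos (le_max_right _ _)
  have hKC₁ : K ≤ C₁ * ρ := by
    calc K = (K / ρ) * ρ := by field_simp
    _ ≤ C₁ * ρ := mul_le_mul_of_nonneg_right (le_max_left _ _) hρ.le
  -- φ bound: φ t ≤ φ t₀ - α (t - t₀)
  have hφbound : ∀ t ≥ t₀, φ t ≤ φ t₀ - α * (t - t₀) := by
    have key := mono_aux t₀ (fun t => φ t₀ - φ t - α * (t - t₀))
      (fun t => -φ' t - α)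
      (by
        intro t ht
        have h1 : HasDerivAt (fun s : ℝ => α * (s - t₀)) α t := by
          simpa using ((hasDerivAt_id t).sub_const t₀).const_mul α
        have h4 := ((hφ t ht).const_sub (φ t₀)).sub h1
        exact h4)
      (by intro t ht; have := hφ' t ht; show 0 ≤ -φ' t - α; linarith)
    intro t ht
    have := key t ht
    simp only [sub_self, mul_zero] at this
    linarith
  -- pointwise derivative bound
  have hderiv : ∀ t ≥ t₀, -2 * a t (x t) * φ t ≥ α * C₀ * (2 * (t - t₀)) - K := by
    intro t ht
    have hA := ha t (x t)
    have hφt := hφbound t ht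
    have hs : 0 ≤ t - t₀ := by linarith
    rcases le_or_gt (φ t) 0 with h | h
    · nlinarith [mul_nonneg hs hM0, mul_le_mul_of_nonpos_right hA.1 h]
    · have hst : α * (t - t₀) ≤ M := by nlinarith
      have hC₀'pos : (0:ℝ) < C₀' := lt_of_lt_of_le hC₀ hC₀'
      have h1 : a t (x t) * φ t ≤ C₀' * φ t := by
        have := mul_le_mul_of_nonneg_right hA.2 h.le
        linarith
      have h2 : C₀' * φ t ≤ C₀' * M :=
        mul_le_mul_of_nonneg_left (le_trans hφt (by nlinarith [mul_nonneg hα.le hs])) hC₀'pos.le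
      have h3 : C₀ * (α * (t - t₀)) ≤ C₀ * M := mul_le_mul_of_nonneg_left hst hC₀.le
      nlinarith [h1, h2, h3]
  -- main integrated bound with K
  have hmain : ∀ t ≥ t₀, ‖x t‖ ^ 2 ≥ α * C₀ * (t - t₀) ^ 2 - K * (t - t₀) := by
    have key := mono_aux t₀
      (fun t => ‖x t‖ ^ 2 - (α * C₀ * (t - t₀) ^ 2 - K * (t - t₀)))
      (fun t => -2 * a t (x t) * φ t - (α * C₀ * (2 * (t - t₀)) - K))
      (by
        intro t ht
        have h1 : HasDerivAt (fun s : ℝ => α * C₀ * (s - t₀) ^ 2 - K * (s - t₀))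
            (α * C₀ * (2 * (t - t₀)) - K) t := by
          have hb := (hasDerivAt_id t).sub_const t₀
          have h2 := (hb.pow 2).const_mul (α * C₀)
          have h3 := hb.const_mul K
          have h4 := h2.sub h3
          simp at h4
          exact h4
        exact (hx t ht).sub h1)
      (by intro t ht; have := hderiv t ht; simp; linarith)
    intro t ht
    have := key t ht
    simp only [sub_self] at this
    nlinarith [norm_nonneg (x t₀), sq_nonneg (‖x t₀‖)]
  refine ⟨C₁, hC₁0, ?_, ?_⟩
  · intro t ht
    have h1 := hmain t ht
    have hs : 0 ≤ t - t₀ := by linarith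
    nlinarith [mul_le_mul_of_nonneg_right hKC₁ hs, sq_nonneg ρ]
  · intro R hR
    have hR0 : 0 < R := lt_trans hρ hR
    refine ⟨(C₁ * ρ + ρ ^ 2 + R ^ 2 + 1 + α * C₀) / (α * C₀), by positivity, ?_⟩
    intro t hts
    set s : ℝ := t - t₀ with hsdef
    have hαC : 0 < α * C₀ := by positivity
    have hQ : C₁ * ρ + ρ ^ 2 + R ^ 2 + 1 + α * C₀ < s * (α * C₀) :=
      (div_lt_iff₀ hαC).mp hts
    have hs1 : 1 ≤ s := by nlinarith [sq_nonneg ρ, sq_nonneg R]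
    have hs0 : 0 < s := by linarith
    have ht : t ≥ t₀ := by simp only [hsdef] at hs0; linarith
    have hb : ‖x t‖ ^ 2 ≥ α * C₀ * s ^ 2 - K * s := by
      rw [hsdef]; exact hmain t ht
    have hKs : K * s ≤ C₁ * ρ * s := mul_le_mul_of_nonneg_right hKC₁ hs0.le
    have hsq : ‖x t‖ ^ 2 > R ^ 2 := by
      have h4 := mul_lt_mul_of_pos_right hQ hs0
      have h5 : (0:ℝ) ≤ (s - 1) * (ρ ^ 2 + R ^ 2 + 1 + α * C₀) :=
        mul_nonneg (sub_nonneg.mpr hs1) (by positivity)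
      nlinarith [h4, h5]
    exact lt_of_pow_lt_pow_left₀ 2 (norm_nonneg (x t)) hsq
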